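/- Let h₀, h_G be complex numbers, let a_q, b_q, a_p, b_p be nonnegative real numbers, and let s_q, s_p be complex numbers with |s_q|² ≤ a_q·b_q and |s_p|² ≤ a_p·b_p. Define S_q = |h₀|²·a_q + |h_G|²·b_q + 2·Re( conj(h₀)·h_G·s_q ) and S_p = |h₀|²·a_p + |h_G|²·b_p − 2·Re( conj(h₀)·h_G·s_p ). Then S_q · S_p ≥ 4|h₀·h_G|² ( √(a_q·b_q) − |s_q| ) ( √(a_p·b_p) − |s_p| ). -/

import Mathlib

/-- General uncertainty relation for phase-insensitive feedback oscillators: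
`S_q · S_p ≥ 4|h₀ h_G|² (√(a_q b_q) − |s_q|)(√(a_p b_p) − |s_p|)`. -/
theorem stmt_2 (h₀ hG : ℂ) (aq bq ap bp : ℝ)
    (haq : 0 ≤ aq) (hbq : 0 ≤ bq) (hap : 0 ≤ ap) (hbp : 0 ≤ bp)
    (sq sp : ℂ)
    (hsq : ‖sq‖ ^ 2 ≤ aq * bq) (hsp : ‖sp‖ ^ 2 ≤ ap * bp) :
    (‖h₀‖ ^ 2 * aq + ‖hG‖ ^ 2 * bq
        + 2 * ((starRingEnd ℂ) h₀ * hG * sq).re)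
      * (‖h₀‖ ^ 2 * ap + ‖hG‖ ^ 2 * bp
        - 2 * ((starRingEnd ℂ) h₀ * hG * sp).re)
      ≥ 4 * ‖h₀ * hG‖ ^ 2
        * (Real.sqrt (aq * bq) - ‖sq‖)
        * (Real.sqrt (ap * bp) - ‖sp‖) := by
  set A := ‖h₀‖ with hA
  set B := ‖hG‖ with hB
  have hA0 : 0 ≤ A := norm_nonneg _
  have hB0 : 0 ≤ B := norm_nonneg _
  have hreq : |((starRingEnd ℂ) h₀ * hG * sq).re| ≤ A * B * ‖sq‖ := by
    calc |((starRingEnd ℂ) h₀ * hG * sq).re| ≤ ‖(starRingEnd ℂ) h₀ * hG * sq‖ :=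
          Complex.abs_re_le_norm _
      _ = A * B * ‖sq‖ := by
          simp [map_mul, Complex.norm_conj, hA, hB]
  have hrep : |((starRingEnd ℂ) h₀ * hG * sp).re| ≤ A * B * ‖sp‖ := by
    calc |((starRingEnd ℂ) h₀ * hG * sp).re| ≤ ‖(starRingEnd ℂ) h₀ * hG * sp‖ :=
          Complex.abs_re_le_norm _
      _ = A * B * ‖sp‖ := by
          simp [map_mul, Complex.norm_conj, hA, hB]
  have hsq' : ‖sq‖ ≤ Real.sqrt (aq * bq) := by
    have := Real.sqrt_le_sqrt hsq
    rwa [Real.sqrt_sq (norm_nonneg _)] at this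
  have hsp' : ‖sp‖ ≤ Real.sqrt (ap * bp) := by
    have := Real.sqrt_le_sqrt hsp
    rwa [Real.sqrt_sq (norm_nonneg _)] at this
  have hsqrtq : Real.sqrt (aq * bq) = Real.sqrt aq * Real.sqrt bq := Real.sqrt_mul haq _
  have hsqrtp : Real.sqrt (ap * bp) = Real.sqrt ap * Real.sqrt bp := Real.sqrt_mul hap _
  have haq2 : Real.sqrt aq ^ 2 = aq := Real.sq_sqrt haq
  have hbq2 : Real.sqrt bq ^ 2 = bq := Real.sq_sqrt hbq
  have hap2 : Real.sqrt ap ^ 2 = ap := Real.sq_sqrt hap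
  have hbp2 : Real.sqrt bp ^ 2 = bp := Real.sq_sqrt hbp
  have amgmq : 2 * A * B * Real.sqrt (aq * bq) ≤ A ^ 2 * aq + B ^ 2 * bq := by
    rw [hsqrtq]
    nlinarith [sq_nonneg (A * Real.sqrt aq - B * Real.sqrt bq)]
  have amgmp : 2 * A * B * Real.sqrt (ap * bp) ≤ A ^ 2 * ap + B ^ 2 * bp := by
    rw [hsqrtp]
    nlinarith [sq_nonneg (A * Real.sqrt ap - B * Real.sqrt bp)]
  have hSq : 2 * A * B * (Real.sqrt (aq * bq) - ‖sq‖)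
      ≤ A ^ 2 * aq + B ^ 2 * bq + 2 * ((starRingEnd ℂ) h₀ * hG * sq).re := by
    have h1 := (abs_le.mp hreq).1
    rw [mul_sub]
    linarith [amgmq]
  have hSp : 2 * A * B * (Real.sqrt (ap * bp) - ‖sp‖)
      ≤ A ^ 2 * ap + B ^ 2 * bp - 2 * ((starRingEnd ℂ) h₀ * hG * sp).re := by
    have h1 := (abs_le.mp hrep).2
    rw [mul_sub]
    linarith [amgmp]
  have hLq : 0 ≤ 2 * A * B * (Real.sqrt (aq * bq) - ‖sq‖) := by
    have : 0 ≤ Real.sqrt (aq * bq) - ‖sq‖ := by linarith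
    positivity
  have hLp : 0 ≤ 2 * A * B * (Real.sqrt (ap * bp) - ‖sp‖) := by
    have : 0 ≤ Real.sqrt (ap * bp) - ‖sp‖ := by linarith
    positivity
  have habs : ‖h₀ * hG‖ = A * B := by simp [map_mul, hA, hB]
  have key : (2 * A * B * (Real.sqrt (aq * bq) - ‖sq‖))
      * (2 * A * B * (Real.sqrt (ap * bp) - ‖sp‖))
      ≤ (A ^ 2 * aq + B ^ 2 * bq + 2 * ((starRingEnd ℂ) h₀ * hG * sq).re)
      * (A ^ 2 * ap + B ^ 2 * bp - 2 * ((starRingEnd ℂ) h₀ * hG * sp).re) :=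
    mul_le_mul hSq hSp hLp (le_trans hLq hSq)
  rw [ge_iff_le, habs]
  calc 4 * (A * B) ^ 2 * (Real.sqrt (aq * bq) - ‖sq‖)
        * (Real.sqrt (ap * bp) - ‖sp‖)
      = (2 * A * B * (Real.sqrt (aq * bq) - ‖sq‖))
        * (2 * A * B * (Real.sqrt (ap * bp) - ‖sp‖)) := by ring
    _ ≤ _ := key
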